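/- Suppose μ is a positive vector, M a reciprocal positive matrix, and D(M,μ) ≤ δ for some δ > 0. If m_{ij}/m_{kl} > (δ + 1)² and m_{ij} > m_{kl} > 1, then μ_i/μ_j > μ_k/μ_l. -/

import Mathlib

open Matrix Finset

/-- Koczkodaj's inconsistency index: maximum over distinct triples. -/
noncomputable def kocz {n : ℕ} (M : Matrix (Fin n) (Fin n) ℝ) : ℝ :=
  sSup {x : ℝ | ∃ i j k : Fin n, i ≠ j ∧ j ≠ k ∧ i ≠ k ∧
    x = min |1 - M i j / (M i k * M k j)| |1 - (M i k * M k j) / M i j|}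

/-- Ranking error. -/
noncomputable def eps {n : ℕ} (M : Matrix (Fin n) (Fin n) ℝ) (μ : Fin n → ℝ)
    (i j : Fin n) : ℝ :=
  (1 / M i j) * (μ i / μ j)

/-- Local ranking discrepancy. -/
noncomputable def locE {n : ℕ} (M : Matrix (Fin n) (Fin n) ℝ) (μ : Fin n → ℝ)
    (i j : Fin n) : ℝ :=
  max (eps M μ i j - 1) (1 / eps M μ i j - 1)

/-- Global ranking discrepancy. -/
noncomputable def disc {n : ℕ} (M : Matrix (Fin n) (Fin n) ℝ) (μ : Fin n → ℝ) : ℝ :=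
  sSup {x : ℝ | ∃ i j : Fin n, x = locE M μ i j}

lemma locE_le_disc {n : ℕ} (M : Matrix (Fin n) (Fin n) ℝ) (μ : Fin n → ℝ)
    (i j : Fin n) : locE M μ i j ≤ disc M μ := by
  have hset : {x : ℝ | ∃ i j : Fin n, x = locE M μ i j} =
      Set.range (fun p : Fin n × Fin n => locE M μ p.1 p.2) := by
    ext x
    constructor
    · rintro ⟨a, b, rfl⟩; exact ⟨(a, b), rfl⟩
    · rintro ⟨⟨a, b⟩, rfl⟩; exact ⟨a, b, rfl⟩
  have hbdd : BddAbove {x : ℝ | ∃ i j : Fin n, x = locE M μ i j} := by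
    rw [hset]
    exact (Set.finite_range _).bddAbove
  exact le_csSup hbdd ⟨i, j, rfl⟩

theorem poip_from_disc {n : ℕ} (M : Matrix (Fin n) (Fin n) ℝ)
    (hpos : ∀ i j, 0 < M i j) (hrec : ∀ i j, M i j = 1 / M j i)
    (μ : Fin n → ℝ) (hμ : ∀ i, 0 < μ i)
    (δ : ℝ) (hδ : 0 < δ) (hD : disc M μ ≤ δ)
    (i j k l : Fin n)
    (h : M i j / M k l > (δ + 1) ^ 2)
    (h1 : M i j > M k l) (h2 : M k l > 1) :
    μ i / μ j > μ k / μ l := by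
  have hδ1 : (0:ℝ) < δ + 1 := by linarith
  have heij : 0 < eps M μ i j :=
    mul_pos (one_div_pos.mpr (hpos i j)) (div_pos (hμ i) (hμ j))
  have hekl : 0 < eps M μ k l :=
    mul_pos (one_div_pos.mpr (hpos k l)) (div_pos (hμ k) (hμ l))
  have hij := le_trans (locE_le_disc M μ i j) hD
  have hkl := le_trans (locE_le_disc M μ k l) hD
  have hij2 : 1 / eps M μ i j - 1 ≤ δ := le_trans (le_max_right _ _) hij
  have hkl1 : eps M μ k l - 1 ≤ δ := le_trans (le_max_left _ _) hkl
  -- eps i j ≥ 1/(δ+1)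
  have hlow : 1 / (δ + 1) ≤ eps M μ i j := by
    have : 1 / eps M μ i j ≤ δ + 1 := by linarith
    rw [div_le_iff₀ heij] at this
    rw [div_le_iff₀ hδ1]
    nlinarith
  have hup : eps M μ k l ≤ δ + 1 := by linarith
  -- μ i / μ j = eps M μ i j * M i j
  have hMij : μ i / μ j = eps M μ i j * M i j := by
    rw [eps]; field_simp
    rw [mul_div_mul_right _ _ (hpos i j).ne']
  have hMkl : μ k / μ l = eps M μ k l * M k l := by
    rw [eps]; field_simp
  rw [hMij, hMkl]
  have hkey : M i j > (δ + 1) ^ 2 * M k l :=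
    (lt_div_iff₀ (hpos k l)).mp h
  calc eps M μ k l * M k l ≤ (δ + 1) * M k l :=
        mul_le_mul_of_nonneg_right hup (hpos k l).le
    _ < (1 / (δ + 1)) * M i j := by
        rw [div_mul_eq_mul_div, lt_div_iff₀ hδ1]
        nlinarith
    _ ≤ eps M μ i j * M i j := mul_le_mul_of_nonneg_right hlow (hpos i j).le
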